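/- (Guralnick's lemma) Let k be an algebraically closed field and let A, B be n×n matrices over k such that the matrix AB − BA has rank at most 1. Then A and B can be simultaneously conjugated to upper triangular form: there exists an invertible n×n matrix P over k such that both P A P⁻¹ and P B P⁻¹ are upper triangular. -/

import Mathlib

open Module Matrix

universe u v

lemma guralnick_common_eigenvector (k : Type v) [Field k] [IsAlgClosed k] :
    ∀ (d : ℕ) (V : Type u) [AddCommGroup V] [Module k V] [FiniteDimensional k V],
      Module.finrank k V = d → Nontrivial V →
      ∀ f g : Module.End k V,
        Module.finrank k (LinearMap.range (f * g - g * f)) ≤ 1 →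
        ∃ v : V, v ≠ 0 ∧ ∃ μ ν : k, f v = μ • v ∧ g v = ν • v := by
  intro d
  induction d using Nat.strong_induction_on with
  | _ d IH =>
  intro V _ _ _ hd hnt f g hrank
  haveI := hnt
  obtain ⟨μ, hμ⟩ := Module.End.exists_eigenvalue f
  by_cases hinv : ∀ w ∈ f.eigenspace μ, g w ∈ f.eigenspace μ
  · -- eigenspace is g-invariant
    haveI : Nontrivial (f.eigenspace μ) :=
      Submodule.nontrivial_iff_ne_bot.mpr (Module.End.hasEigenvalue_iff.mp hμ)
    set gW := g.restrict hinv with hgW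
    obtain ⟨ν, hν⟩ := Module.End.exists_eigenvalue gW
    obtain ⟨w, hwmem, hw0⟩ := hν.exists_hasEigenvector
    refine ⟨(w : V), by simpa using hw0, μ, ν, ?_, ?_⟩
    · exact Module.End.mem_eigenspace_iff.mp w.2
    · have h1 : gW w = ν • w := Module.End.mem_eigenspace_iff.mp hwmem
      have h2 : (gW w : V) = g w := LinearMap.restrict_coe_apply _ _ _
      rw [← h2, h1, Submodule.coe_smul]
  · push_neg at hinv
    obtain ⟨w, hwW, hgw⟩ := hinv
    set C := f * g - g * f with hC
    have hfw : f w = μ • w := Module.End.mem_eigenspace_iff.mp hwW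
    have hCw : C w = (f - μ • 1) (g w) := by
      simp [hC, Module.End.mul_apply, hfw, _root_.map_smul]
    have hu0 : C w ≠ 0 := by
      intro h0
      apply hgw
      rw [Module.End.eigenspace_def, LinearMap.mem_ker]
      rw [hCw] at h0
      exact h0
    set V' := LinearMap.range (f - μ • (1 : Module.End k V)) with hV'
    have huV' : C w ∈ V' := hCw ▸ LinearMap.mem_range_self _ _
    have hrange : LinearMap.range C ≤ V' := by
      have hle : (Submodule.span k {C w}) ≤ LinearMap.range C :=
        Submodule.span_le.mpr (Set.singleton_subset_iff.mpr (LinearMap.mem_range_self _ _))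
      have heq : Submodule.span k {C w} = LinearMap.range C := by
        apply Submodule.eq_of_le_of_finrank_le hle
        rw [finrank_span_singleton hu0]
        exact hrank
      rw [← heq]
      exact Submodule.span_le.mpr (Set.singleton_subset_iff.mpr huV')
    have hfV' : ∀ x ∈ V', f x ∈ V' := by
      rintro x ⟨y, rfl⟩
      exact ⟨f y, by simp [LinearMap.smul_apply, _root_.map_smul]⟩
    have hgV' : ∀ x ∈ V', g x ∈ V' := by
      rintro x ⟨y, rfl⟩
      have : g ((f - μ • 1) y) = (f - μ • 1) (g y) - C y := by
        simp [hC, Module.End.mul_apply, _root_.map_smul]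
      rw [this]
      exact Submodule.sub_mem _ (LinearMap.mem_range_self _ _) (hrange (LinearMap.mem_range_self _ _))
    have hkerW : LinearMap.ker (f - μ • (1 : Module.End k V)) = f.eigenspace μ :=
      (Module.End.eigenspace_def).symm
    have hlt : finrank k V' < d := by
      have h1 := LinearMap.finrank_range_add_finrank_ker (f - μ • (1 : Module.End k V))
      rw [← hV', hkerW, hd] at h1
      have h2 : 0 < finrank k (f.eigenspace μ) := by
        rw [Module.finrank_pos_iff]
        exact Submodule.nontrivial_iff_ne_bot.mpr (Module.End.hasEigenvalue_iff.mp hμ)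
      omega
    haveI : Nontrivial V' := Submodule.nontrivial_iff_ne_bot.mpr
      ((Submodule.ne_bot_iff _).mpr ⟨C w, huV', hu0⟩)
    set f' := f.restrict hfV' with hf'
    set g' := g.restrict hgV' with hg'
    have hcomm : finrank k (LinearMap.range (f' * g' - g' * f')) ≤ 1 := by
      set D := f' * g' - g' * f' with hD
      have key : ∀ x : V', ((D x : V')) = (⟨C x, hrange (LinearMap.mem_range_self _ _)⟩ : V') := by
        intro x
        ext
        simp [hD, hC, Module.End.mul_apply, LinearMap.restrict_coe_apply, hf', hg']
      have h1 : finrank k (Submodule.map V'.subtype (LinearMap.range D))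
          = finrank k (LinearMap.range D) :=
        Submodule.finrank_map_subtype_eq _ _
      have h2 : Submodule.map V'.subtype (LinearMap.range D) ≤ LinearMap.range C := by
        rintro y hy
        obtain ⟨z, ⟨x, rfl⟩, rfl⟩ := hy
        rw [key x]
        exact LinearMap.mem_range_self _ _
      calc finrank k (LinearMap.range D)
          = finrank k (Submodule.map V'.subtype (LinearMap.range D)) := h1.symm
        _ ≤ finrank k (LinearMap.range C) := Submodule.finrank_mono h2
        _ ≤ 1 := hrank
    obtain ⟨v', hv'0, μ', ν', hfv', hgv'⟩ :=
      IH (finrank k V') (hd ▸ hlt) V' rfl inferInstance f' g' hcomm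
    refine ⟨(v' : V), by simpa using hv'0, μ', ν', ?_, ?_⟩
    · have := congrArg (Subtype.val) hfv'
      simpa [LinearMap.restrict_coe_apply, hf'] using this
    · have := congrArg (Subtype.val) hgv'
      simpa [LinearMap.restrict_coe_apply, hg'] using this

lemma guralnick_rank_submatrix_succ_le {k : Type v} [Field k] {n : ℕ}
    (M : Matrix (Fin (n + 1)) (Fin (n + 1)) k) :
    (M.submatrix Fin.succ Fin.succ).rank ≤ M.rank := by
  set E : Matrix (Fin n) (Fin (n + 1)) k :=
    Matrix.of (fun i j => if j = i.succ then 1 else 0) with hE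
  have h1 : ∀ (X : Matrix (Fin (n+1)) (Fin (n+1)) k) (i : Fin n) (b : Fin (n+1)),
      (E * X) i b = X i.succ b := by
    intro X i b
    simp [Matrix.mul_apply, hE, ite_mul]
  have h2 : M.submatrix Fin.succ Fin.succ = E * M * E.transpose := by
    ext i j
    rw [Matrix.mul_apply]
    simp [hE, Matrix.transpose_apply, mul_ite, h1 M i]
    exact (h1 M i j.succ).symm
  rw [h2]
  calc ((E * M) * E.transpose).rank ≤ (E * M).rank := Matrix.rank_mul_le_left _ _
    _ ≤ M.rank := Matrix.rank_mul_le_right _ _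

lemma guralnick_blockTriangular_of_cons {k : Type v} [Field k] {n : ℕ}
    (T : Matrix (Fin (n + 1)) (Fin (n + 1)) k)
    (h0 : ∀ i : Fin n, T i.succ 0 = 0)
    (h1 : (T.submatrix Fin.succ Fin.succ).BlockTriangular id) :
    T.BlockTriangular id := by
  intro i j hij
  rcases Fin.eq_zero_or_eq_succ i with rfl | ⟨i', rfl⟩
  · exact absurd hij (Fin.not_lt_zero _)
  rcases Fin.eq_zero_or_eq_succ j with rfl | ⟨j', rfl⟩
  · exact h0 i'
  · exact h1 (by simpa [Fin.succ_lt_succ_iff] using hij)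

theorem guralnick_aux (k : Type v) [Field k] [IsAlgClosed k] :
    ∀ (n : ℕ) (A B : Matrix (Fin n) (Fin n) k), (A * B - B * A).rank ≤ 1 →
    ∃ P : Matrix (Fin n) (Fin n) k, IsUnit P.det ∧
      (P * A * P⁻¹).BlockTriangular id ∧ (P * B * P⁻¹).BlockTriangular id := by
  intro n
  induction n with
  | zero =>
    intro A B _
    exact ⟨1, by simp, fun i _ _ => i.elim0, fun i _ _ => i.elim0⟩
  | succ n IH =>
    intro A B hAB
    have hcomm : A.mulVecLin * B.mulVecLin - B.mulVecLin * A.mulVecLin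
        = (A * B - B * A).mulVecLin := by
      apply LinearMap.ext
      intro x
      simp [Matrix.mulVecLin_apply, Matrix.sub_mulVec, Matrix.mulVec_mulVec,
        Module.End.mul_apply]
    have hrk : finrank k (LinearMap.range
        (A.mulVecLin * B.mulVecLin - B.mulVecLin * A.mulVecLin)) ≤ 1 := by
      rw [hcomm]
      exact hAB
    obtain ⟨v, hv0, μ, ν, hfv, hgv⟩ :=
      guralnick_common_eigenvector k (finrank k (Fin (n+1) → k)) (Fin (n+1) → k)
        rfl inferInstance A.mulVecLin B.mulVecLin hrk
    have hAv : A *ᵥ v = μ • v := by rw [← Matrix.mulVecLin_apply]; exact hfv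
    have hBv : B *ᵥ v = ν • v := by rw [← Matrix.mulVecLin_apply]; exact hgv
    -- build a basis with first vector `v`
    obtain ⟨W, hcompl⟩ := Submodule.exists_isCompl (Submodule.span k {v})
    have hW : finrank k W = n := by
      have h1 := Submodule.finrank_add_eq_of_isCompl hcompl
      rw [finrank_span_singleton hv0] at h1
      have h2 : finrank k (Fin (n+1) → k) = n + 1 := by simp
      omega
    have bW : Basis (Fin n) k W := Module.finBasisOfFinrankEq k W hW
    have hli : ∀ (c : k), ∀ x ∈ W, c • v + x = 0 → c = 0 := by
      intro c x hx h
      have h1 : c • v ∈ W := by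
        rw [eq_neg_of_add_eq_zero_left h]
        exact neg_mem hx
      have h2 : c • v ∈ Submodule.span k {v} :=
        Submodule.smul_mem _ c (Submodule.mem_span_singleton_self v)
      have h3 : c • v = 0 := (Submodule.disjoint_def.mp hcompl.disjoint) _ h2 h1
      rcases smul_eq_zero.mp h3 with hc | hv
      · exact hc
      · exact absurd hv hv0
    have hsp : ∀ z : (Fin (n+1) → k), ∃ c : k, z + c • v ∈ W := by
      intro z
      have hz : z ∈ Submodule.span k {v} ⊔ W := by
        rw [hcompl.codisjoint.eq_top]; trivial
      rw [Submodule.mem_sup] at hz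
      obtain ⟨p, hp, q, hq, rfl⟩ := hz
      obtain ⟨a, rfl⟩ := Submodule.mem_span_singleton.mp hp
      refine ⟨-a, ?_⟩
      have : a • v + q + (-a) • v = q := by module
      rw [this]; exact hq
    set b : Basis (Fin (n+1)) k (Fin (n+1) → k) := Basis.mkFinCons v bW hli hsp with hbdef
    have hb0 : b 0 = v := by
      have h := Basis.coe_mkFinCons v bW hli hsp
      calc b 0 = (Fin.cons v ((↑) ∘ bW) : Fin (n+1) → _) 0 := by rw [hbdef, h]
        _ = v := rfl
    set Q : Matrix (Fin (n+1)) (Fin (n+1)) k := (Pi.basisFun k (Fin (n+1))).toMatrix ⇑b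
      with hQdef
    have hQu : IsUnit Q.det :=
      Matrix.isUnit_det_of_right_inverse (Basis.toMatrix_mul_toMatrix_flip _ b)
    have hQcol : ∀ i, Q i 0 = v i := by
      intro i
      rw [hQdef, Basis.toMatrix_apply, Pi.basisFun_repr, hb0]
    have hQv : Q *ᵥ Pi.single 0 1 = v := by
      funext i
      rw [Matrix.mulVec_single]
      simp [hQcol i]
    have colfact : ∀ (X : Matrix (Fin (n+1)) (Fin (n+1)) k) (c : k), X *ᵥ v = c • v →
        ∀ i : Fin (n+1), (Q⁻¹ * X * Q) i 0 = c * (Pi.single (0 : Fin (n+1)) (1 : k) : Fin (n+1) → k) i := by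
      intro X c hX i
      have hQiv : Q⁻¹ *ᵥ v = Pi.single 0 1 := by
        rw [← hQv, Matrix.mulVec_mulVec, Matrix.nonsing_inv_mul _ hQu, Matrix.one_mulVec]
      have h1 : (Q⁻¹ * X * Q) *ᵥ Pi.single 0 1
          = c • (Pi.single (0 : Fin (n+1)) (1 : k) : Fin (n+1) → k) := by
        rw [← Matrix.mulVec_mulVec, ← Matrix.mulVec_mulVec, hQv, hX, Matrix.mulVec_smul,
          hQiv]
      have h2 := congrFun h1 i
      rw [Matrix.mulVec_single] at h2
      simpa using h2
    set M := Q⁻¹ * A * Q with hMdef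
    set N := Q⁻¹ * B * Q with hNdef
    have hM0 : ∀ i : Fin n, M i.succ 0 = 0 := by
      intro i
      rw [hMdef, colfact A μ hAv i.succ, Pi.single_eq_of_ne (Fin.succ_ne_zero i), mul_zero]
    have hN0 : ∀ i : Fin n, N i.succ 0 = 0 := by
      intro i
      rw [hNdef, colfact B ν hBv i.succ, Pi.single_eq_of_ne (Fin.succ_ne_zero i), mul_zero]
    set A₁ := M.submatrix Fin.succ Fin.succ with hA₁
    set B₁ := N.submatrix Fin.succ Fin.succ with hB₁
    have hconj : ∀ X Y : Matrix (Fin (n+1)) (Fin (n+1)) k,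
        (Q⁻¹ * X * Q) * (Q⁻¹ * Y * Q) = Q⁻¹ * (X * Y) * Q := by
      intro X Y
      calc (Q⁻¹ * X * Q) * (Q⁻¹ * Y * Q) = Q⁻¹ * X * ((Q * Q⁻¹) * (Y * Q)) := by
            simp only [Matrix.mul_assoc]
        _ = Q⁻¹ * (X * Y) * Q := by
            rw [Matrix.mul_nonsing_inv _ hQu, Matrix.one_mul]
            simp only [Matrix.mul_assoc]
    have hMN : M * N - N * M = Q⁻¹ * (A * B - B * A) * Q := by
      rw [hMdef, hNdef, hconj, hconj, Matrix.mul_sub, Matrix.sub_mul]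
    have hsub : A₁ * B₁ - B₁ * A₁ = (M * N - N * M).submatrix Fin.succ Fin.succ := by
      ext i j
      simp only [Matrix.sub_apply, Matrix.mul_apply, Matrix.submatrix_apply, hA₁, hB₁]
      rw [Fin.sum_univ_succ, Fin.sum_univ_succ (f := fun a => N i.succ a * M a j.succ)]
      simp [hM0, hN0]
    have hrank1 : (A₁ * B₁ - B₁ * A₁).rank ≤ 1 := by
      calc (A₁ * B₁ - B₁ * A₁).rank
          = ((Q⁻¹ * (A * B - B * A) * Q).submatrix Fin.succ Fin.succ).rank := by
            rw [hsub, hMN]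
        _ ≤ (Q⁻¹ * (A * B - B * A) * Q).rank := guralnick_rank_submatrix_succ_le _
        _ ≤ ((A * B - B * A) * Q).rank := by
            rw [Matrix.mul_assoc]; exact Matrix.rank_mul_le_right _ _
        _ ≤ (A * B - B * A).rank := Matrix.rank_mul_le_left _ _
        _ ≤ 1 := hAB
    obtain ⟨P', hP'u, hP'A, hP'B⟩ := IH A₁ B₁ hrank1
    set R : Matrix (Fin (n+1)) (Fin (n+1)) k :=
      Matrix.of (Fin.cons (Fin.cons 1 0) fun i => Fin.cons 0 (P' i)) with hRdef
    set S : Matrix (Fin (n+1)) (Fin (n+1)) k :=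
      Matrix.of (Fin.cons (Fin.cons 1 0) fun i => Fin.cons 0 (P'⁻¹ i)) with hSdef
    have hborder : ∀ (U V' : Matrix (Fin n) (Fin n) k),
        (Matrix.of (Fin.cons (Fin.cons 1 0) fun i => Fin.cons 0 (U i))
          : Matrix (Fin (n+1)) (Fin (n+1)) k) *
          (Matrix.of (Fin.cons (Fin.cons 1 0) fun i => Fin.cons 0 (V' i))) =
        Matrix.of (Fin.cons (Fin.cons 1 0) fun i => Fin.cons 0 ((U * V') i)) := by
      intro U V'
      ext i j
      rcases Fin.eq_zero_or_eq_succ i with rfl | ⟨i', rfl⟩ <;>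
        rcases Fin.eq_zero_or_eq_succ j with rfl | ⟨j', rfl⟩ <;>
        simp [Matrix.mul_apply, Fin.sum_univ_succ]
    have hRS : R * S = 1 := by
      rw [hRdef, hSdef, hborder, Matrix.mul_nonsing_inv _ hP'u]
      ext i j
      rcases Fin.eq_zero_or_eq_succ i with rfl | ⟨i', rfl⟩ <;>
        rcases Fin.eq_zero_or_eq_succ j with rfl | ⟨j', rfl⟩ <;>
        simp [Matrix.one_apply, Fin.succ_ne_zero, (Fin.succ_ne_zero _).symm, Fin.succ_inj]
    have hRu : IsUnit R.det := Matrix.isUnit_det_of_right_inverse hRS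
    have hRinv : R⁻¹ = S := Matrix.inv_eq_right_inv hRS
    have hPinv : (R * Q⁻¹)⁻¹ = Q * S := by
      rw [Matrix.mul_inv_rev, Matrix.nonsing_inv_nonsing_inv _ hQu, hRinv]
    have hconj2 : ∀ (T : Matrix (Fin (n+1)) (Fin (n+1)) k), (∀ i : Fin n, T i.succ 0 = 0) →
        (∀ i : Fin n, (R * T * S) i.succ 0 = 0) ∧
          (R * T * S).submatrix Fin.succ Fin.succ
            = P' * (T.submatrix Fin.succ Fin.succ) * P'⁻¹ := by
      intro T hT
      constructor
      · intro i
        simp [Matrix.mul_apply, Fin.sum_univ_succ, hRdef, hSdef, hT, Finset.sum_mul,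
          Finset.mul_sum]
      · ext i j
        simp [Matrix.mul_apply, Fin.sum_univ_succ, hRdef, hSdef, Finset.sum_mul,
          Finset.mul_sum]
    refine ⟨R * Q⁻¹, ?_, ?_, ?_⟩
    · rw [Matrix.det_mul]
      exact hRu.mul (Matrix.isUnit_nonsing_inv_det _ hQu)
    · rw [hPinv]
      have hre : R * Q⁻¹ * A * (Q * S) = R * M * S := by
        rw [hMdef]; simp only [Matrix.mul_assoc]
      rw [hre]
      obtain ⟨h0, h1⟩ := hconj2 M hM0
      exact guralnick_blockTriangular_of_cons _ h0 (h1 ▸ hP'A)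
    · rw [hPinv]
      have hre : R * Q⁻¹ * B * (Q * S) = R * N * S := by
        rw [hNdef]; simp only [Matrix.mul_assoc]
      rw [hre]
      obtain ⟨h0, h1⟩ := hconj2 N hN0
      exact guralnick_blockTriangular_of_cons _ h0 (h1 ▸ hP'B)

theorem guralnick_simultaneous_triangularization
    (k : Type*) [Field k] [IsAlgClosed k]
    (n : ℕ) (A B : Matrix (Fin n) (Fin n) k)
    (h : (A * B - B * A).rank ≤ 1) :
    ∃ P : Matrix (Fin n) (Fin n) k, IsUnit P.det ∧
      (P * A * P⁻¹).BlockTriangular id ∧ (P * B * P⁻¹).BlockTriangular id :=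
  guralnick_aux k n A B h
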